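/- Up-down order decomposition: for permutations, the set E(π; S×T) of enriched π-partitions with values in S'×T' (with the up-down order) is in bijection with the disjoint union over all factorizations σ·τ = π in S_n of E(τ;S) × E(σ;T). -/

import Mathlib

/-- A permutation of `{1,…,n}`, modeled as a permutation of `ℕ` fixing `0` and all `i > n`. -/
def IsSn (n : ℕ) (π : Equiv.Perm ℕ) : Prop := ∀ i : ℕ, i = 0 ∨ n < i → π i = i

/-- `S'`: pairs `(s, ε)` with sign `ε : Bool` (`false` = minus, `true` = plus),
ordered `s⁻ < s⁺ < t⁻ < t⁺` for `s < t`. -/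
def sLT {α : Type*} [LinearOrder α] (u v : α × Bool) : Prop :=
  u.1 < v.1 ∨ (u.1 = v.1 ∧ u.2 = false ∧ v.2 = true)

/-- `u ≤⁺ v` in `S'`. -/
def sLEp {α : Type*} [LinearOrder α] (u v : α × Bool) : Prop := sLT u v ∨ (u = v ∧ v.2 = true)

/-- `u ≤⁻ v` in `S'`. -/
def sLEm {α : Type*} [LinearOrder α] (u v : α × Bool) : Prop := sLT u v ∨ (u = v ∧ v.2 = false)

/-- `(s,t) ≤⁺ (u,v)` in the up-down order on `S' × T'`: `s < u`, or `s = u` positive and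
`t ≤⁺ v`, or `s = u` negative and `t ≥⁻ v`. -/
def udLEp {α β : Type*} [LinearOrder α] [LinearOrder β]
    (u v : (α × Bool) × (β × Bool)) : Prop :=
  sLT u.1 v.1 ∨ (u.1 = v.1 ∧
    ((u.1.2 = true ∧ sLEp u.2 v.2) ∨ (u.1.2 = false ∧ sLEm v.2 u.2)))

/-- `(s,t) ≤⁻ (u,v)` in the up-down order on `S' × T'`: `s < u`, or `s = u` positive and
`t ≤⁻ v`, or `s = u` negative and `t ≥⁺ v`. -/
def udLEm {α β : Type*} [LinearOrder α] [LinearOrder β]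
    (u v : (α × Bool) × (β × Bool)) : Prop :=
  sLT u.1 v.1 ∨ (u.1 = v.1 ∧
    ((u.1.2 = true ∧ sLEm u.2 v.2) ∨ (u.1.2 = false ∧ sLEp v.2 u.2)))

/-- Enriched `π`-partitions with values in a set carrying relations `≤⁺` (`lep`) and
`≤⁻` (`lem`): for labels `i` before `j` in the chain of `π`, `f i ≤⁺ f j` if `i < j` in `ℤ`
and `f i ≤⁻ f j` if `i > j` in `ℤ`. -/
def EPPgen {α : Type*} (n : ℕ) (lep lem : α → α → Prop)
    (π : Equiv.Perm ℕ) (f : ℕ → α) : Prop :=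
  ∀ i ∈ Finset.Icc 1 n, ∀ j ∈ Finset.Icc 1 n, π.symm i < π.symm j →
    (i < j → lep (f i) (f j)) ∧ (j < i → lem (f i) (f j))

namespace UpDownAux

lemma sLT_iff_lex {α : Type*} [LinearOrder α] (u v : α × Bool) :
    sLT u v ↔ toLex u < toLex v := by
  rw [Prod.Lex.lt_iff]
  simp [sLT, Bool.lt_iff]

lemma sLT_asymm {α : Type*} [LinearOrder α] {u v : α × Bool}
    (h1 : sLT u v) (h2 : sLT v u) : False := by
  rw [sLT_iff_lex] at h1 h2
  exact lt_asymm h1 h2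

lemma sLT_irrefl {α : Type*} [LinearOrder α] (u : α × Bool) : ¬ sLT u u :=
  fun h => sLT_asymm h h

lemma sLEp_sLEm_asymm {α : Type*} [LinearOrder α] {u v : α × Bool}
    (h1 : sLEp u v) (h2 : sLEm v u) : False := by
  rcases h1 with h1 | ⟨h1, hu⟩ <;> rcases h2 with h2 | ⟨h2, hv⟩
  · exact sLT_asymm h1 h2
  · rw [h2] at h1; exact sLT_irrefl _ h1
  · rw [h1] at h2; exact sLT_irrefl _ h2
  · rw [h1] at hv; rw [hv] at hu; exact Bool.false_ne_true hu

/-- The key used to standardize. -/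
def key {β : Type*} (t : β × Bool) (a : ℕ) : (β ×ₗ Bool) ×ₗ ℤ :=
  toLex (toLex t, if t.2 then (a : ℤ) else -(a : ℤ))

lemma key_lt_iff {β : Type*} [LinearOrder β] {t t' : β × Bool} {a b : ℕ} (hab : a ≠ b) :
    key t a < key t' b ↔ ((a < b → sLEp t t') ∧ (b < a → sLEm t t')) := by
  rw [key, key, Prod.Lex.lt_iff]
  simp only [ofLex_toLex]
  rw [← sLT_iff_lex, toLex_inj]
  constructor
  · rintro (h | ⟨rfl, hz⟩)
    · exact ⟨fun _ => Or.inl h, fun _ => Or.inl h⟩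
    · by_cases ht : t.2 = true
      · rw [if_pos ht, if_pos ht] at hz
        have hab' : a < b := by exact_mod_cast hz
        exact ⟨fun _ => Or.inr ⟨rfl, ht⟩, fun h' => (lt_asymm hab' h').elim⟩
      · rw [if_neg ht, if_neg ht] at hz
        have hba : b < a := by omega
        exact ⟨fun h' => (lt_asymm hba h').elim,
          fun _ => Or.inr ⟨rfl, by simpa using ht⟩⟩
  · rintro ⟨h1, h2⟩
    rcases hab.lt_or_gt with h | h
    · rcases h1 h with hs | ⟨rfl, ht⟩
      · exact Or.inl hs
      · exact Or.inr ⟨rfl, by rw [if_pos ht, if_pos ht]; exact_mod_cast h⟩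
    · rcases h2 h with hs | ⟨rfl, ht⟩
      · exact Or.inl hs
      · refine Or.inr ⟨rfl, ?_⟩
        rw [if_neg (by simp [ht]), if_neg (by simp [ht])]
        omega

lemma memIcc_iff {n : ℕ} {π : Equiv.Perm ℕ} (hπ : IsSn n π) (i : ℕ) :
    π i ∈ Finset.Icc 1 n ↔ i ∈ Finset.Icc 1 n := by
  constructor
  · intro h
    by_contra hi
    have hfix : π i = i := hπ i (by rw [Finset.mem_Icc] at hi; omega)
    rw [hfix] at h
    exact hi h
  · intro h
    by_contra hpi
    have hfix : π (π i) = π i := hπ (π i) (by rw [Finset.mem_Icc] at hpi; omega)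
    rw [π.injective hfix] at hpi
    exact hpi h

lemma isSn_symm {n : ℕ} {π : Equiv.Perm ℕ} (hπ : IsSn n π) : IsSn n π.symm := by
  intro i hi
  have h := hπ i hi
  conv_lhs => rw [← h]
  exact π.symm_apply_apply i

lemma mul_inv_symm_apply (π τ : Equiv.Perm ℕ) (m : ℕ) :
    (π * τ⁻¹).symm m = τ (π.symm m) := by
  rw [Equiv.symm_apply_eq]
  simp [Equiv.Perm.mul_apply]

lemma count_formula {n : ℕ} {ρ : Equiv.Perm ℕ} (hρ : IsSn n ρ) {i : ℕ}
    (hi : i ∈ Finset.Icc 1 n) :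
    ρ i = ((Finset.Icc 1 n).filter fun j => ρ j ≤ ρ i).card := by
  have hcard : ((Finset.Icc 1 n).filter fun j => ρ j ≤ ρ i).card
      = (Finset.Icc 1 (ρ i)).card := by
    apply Finset.card_bij (fun j _ => ρ j)
    · intro a ha
      rw [Finset.mem_filter] at ha
      have h2 := (memIcc_iff hρ a).2 ha.1
      rw [Finset.mem_Icc] at h2 ⊢
      exact ⟨h2.1, ha.2⟩
    · intro a _ b _ hab
      exact ρ.injective hab
    · intro m hm
      have hpin : ρ i ∈ Finset.Icc 1 n := (memIcc_iff hρ i).2 hi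
      rw [Finset.mem_Icc] at hm hpin
      have hmIcc : m ∈ Finset.Icc 1 n := Finset.mem_Icc.2 ⟨hm.1, le_trans hm.2 hpin.2⟩
      refine ⟨ρ.symm m, Finset.mem_filter.2 ⟨(memIcc_iff (isSn_symm hρ) m).2 hmIcc, ?_⟩, ?_⟩
      · rw [ρ.apply_symm_apply]; exact hm.2
      · exact ρ.apply_symm_apply m
  rw [hcard, Nat.card_Icc]
  omega

lemma perm_unique {n : ℕ} {τ τ' : Equiv.Perm ℕ} (hτ : IsSn n τ) (hτ' : IsSn n τ')
    (h : ∀ i ∈ Finset.Icc 1 n, ∀ j ∈ Finset.Icc 1 n, (τ i < τ j ↔ τ' i < τ' j)) :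
    τ = τ' := by
  apply Equiv.ext
  intro i
  by_cases hi : i ∈ Finset.Icc 1 n
  · rw [count_formula hτ hi, count_formula hτ' hi]
    congr 1
    apply Finset.filter_congr
    intro j hj
    rw [← not_lt, ← not_lt, h i hi j hj]
  · have h0 : i = 0 ∨ n < i := by rw [Finset.mem_Icc] at hi; omega
    rw [hτ i h0, hτ' i h0]

lemma perm_exists {X : Type*} [LinearOrder X] (n : ℕ) (K : ℕ → X)
    (hK : Set.InjOn K (Finset.Icc 1 n : Finset ℕ)) :
    ∃ τ : Equiv.Perm ℕ, IsSn n τ ∧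
      ∀ i ∈ Finset.Icc 1 n, ∀ j ∈ Finset.Icc 1 n, (τ i < τ j ↔ K i < K j) := by
  classical
  set P : Finset ℕ := Finset.Icc 1 n with hP
  have hPcard : P.card = n := by simp [hP]
  set Q : Finset X := P.image K with hQdef
  have hQcard : Q.card = n := by
    rw [hQdef, Finset.card_image_of_injOn hK, hPcard]
  have hmem : ∀ x : {y // y ∈ P}, K x.1 ∈ Q := fun x => Finset.mem_image_of_mem K x.2
  have hbij : Function.Bijective
      (fun x : {y // y ∈ P} => (⟨K x.1, hmem x⟩ : {y // y ∈ Q})) := by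
    constructor
    · intro a b hab
      apply Subtype.ext
      apply hK (Finset.mem_coe.2 a.2) (Finset.mem_coe.2 b.2)
      exact congrArg Subtype.val hab
    · rintro ⟨q, hq⟩
      obtain ⟨i, hi, rfl⟩ := Finset.mem_image.1 hq
      exact ⟨⟨i, hi⟩, rfl⟩
  set c := Equiv.ofBijective _ hbij with hc
  set e1 := P.orderIsoOfFin hPcard with he1
  set e2 := Q.orderIsoOfFin hQcard with he2
  set φ : Equiv.Perm {y // y ∈ P} := (c.trans e2.symm.toEquiv).trans e1.toEquiv with hφ
  refine ⟨φ.extendDomain (Equiv.refl _), ?_, ?_⟩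
  · intro i hi
    apply Equiv.Perm.extendDomain_apply_not_subtype
    rw [hP, Finset.mem_Icc]
    omega
  · intro i hi j hj
    rw [φ.extendDomain_apply_subtype (Equiv.refl _) hi,
      φ.extendDomain_apply_subtype (Equiv.refl _) hj]
    rw [Subtype.coe_lt_coe]
    show φ ⟨i, hi⟩ < φ ⟨j, hj⟩ ↔ K i < K j
    rw [hφ]
    simp only [Equiv.trans_apply]
    simp only [show ∀ z, e1.toEquiv z = e1 z from fun _ => rfl,
      show ∀ z, e2.symm.toEquiv z = e2.symm z from fun _ => rfl]
    rw [e1.lt_iff_lt, e2.symm.lt_iff_lt]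
    rw [hc]
    simp only [Equiv.ofBijective_apply]
    exact Subtype.mk_lt_mk

lemma char_tau {T : Type*} [LinearOrder T] {n : ℕ} {π τ : Equiv.Perm ℕ} (hπ : IsSn n π)
    {g : ℕ → T × Bool} (hg : EPPgen n sLEp sLEm (π * τ⁻¹) g) :
    ∀ i ∈ Finset.Icc 1 n, ∀ j ∈ Finset.Icc 1 n, i ≠ j →
      (τ i < τ j ↔ key (g (π i)) (π i) < key (g (π j)) (π j)) := by
  have main : ∀ i ∈ Finset.Icc 1 n, ∀ j ∈ Finset.Icc 1 n, i ≠ j → τ i < τ j →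
      key (g (π i)) (π i) < key (g (π j)) (π j) := by
    intro i hi j hj hij hlt
    have hπij : π i ≠ π j := fun h => hij (π.injective h)
    have h := hg (π i) ((memIcc_iff hπ i).2 hi) (π j) ((memIcc_iff hπ j).2 hj)
      (by rw [mul_inv_symm_apply, mul_inv_symm_apply, Equiv.symm_apply_apply,
        Equiv.symm_apply_apply]; exact hlt)
    exact (key_lt_iff hπij).2 h
  intro i hi j hj hij
  constructor
  · exact main i hi j hj hij
  · intro hK
    rcases lt_or_gt_of_ne (fun h : τ i = τ j => hij (τ.injective h)) with h | h
    · exact h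
    · exact absurd hK (lt_asymm (main j hj i hi (Ne.symm hij) h))

end UpDownAux

open UpDownAux in
/-- Theorem 2.5 (type A): `E(π; S×T)` with the up-down order is in bijection with the
disjoint union over factorizations `σ·τ = π` of `E(τ;S) × E(σ;T)`. The bijection sends
`(τ, f, g)` (with `σ = π τ⁻¹`, `f ∈ E(τ;S)`, `g ∈ E(σ;T)`) to
`F(m) = (f(τ(π⁻¹(m))), g(m))`, i.e. `F(π(i)) = (s_i, t_{τ(i)})` in coordinates. -/
theorem updown_decomposition {S T : Type*} [LinearOrder S] [LinearOrder T]
    [Countable S] [Countable T] (n : ℕ) (π : Equiv.Perm ℕ) (hπ : IsSn n π) :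
    Set.BijOn
      (fun q : Equiv.Perm ℕ × (ℕ → S × Bool) × (ℕ → T × Bool) =>
        fun m => (q.2.1 (q.1 (π.symm m)), q.2.2 m))
      {q : Equiv.Perm ℕ × (ℕ → S × Bool) × (ℕ → T × Bool) |
        IsSn n q.1 ∧ EPPgen n sLEp sLEm q.1 q.2.1 ∧
          EPPgen n sLEp sLEm (π * q.1⁻¹) q.2.2}
      {F : ℕ → (S × Bool) × (T × Bool) | EPPgen n udLEp udLEm π F} := by
  classical
  refine ⟨?_, ?_, ?_⟩
  · -- MapsTo
    rintro ⟨τ, f, g⟩ ⟨hτ, hf, hg⟩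
    simp only [Set.mem_setOf_eq]
    intro a ha b hb hab
    dsimp only
    set i := π.symm a with hia
    set j := π.symm b with hjb
    have hi : i ∈ Finset.Icc 1 n := (memIcc_iff (isSn_symm hπ) a).2 ha
    have hj : j ∈ Finset.Icc 1 n := (memIcc_iff (isSn_symm hπ) b).2 hb
    have hti : τ i ∈ Finset.Icc 1 n := (memIcc_iff hτ i).2 hi
    have htj : τ j ∈ Finset.Icc 1 n := (memIcc_iff hτ j).2 hj
    have hij : i ≠ j := ne_of_lt hab
    have htne : τ i ≠ τ j := fun h => hij (τ.injective h)
    have hfc := hf (τ i) hti (τ j) htj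
      (by rw [Equiv.symm_apply_apply, Equiv.symm_apply_apply]; exact hab)
    rcases lt_or_gt_of_ne htne with hlt | hlt
    · have hs : sLEp (f (τ i)) (f (τ j)) := hfc.1 hlt
      have hgc := hg a ha b hb
        (by rw [mul_inv_symm_apply, mul_inv_symm_apply]; exact hlt)
      constructor
      · intro h
        rcases hs with hslt | ⟨heq, hsgn⟩
        · exact Or.inl hslt
        · exact Or.inr ⟨heq, Or.inl ⟨by rw [heq]; exact hsgn, hgc.1 h⟩⟩
      · intro h
        rcases hs with hslt | ⟨heq, hsgn⟩
        · exact Or.inl hslt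
        · exact Or.inr ⟨heq, Or.inl ⟨by rw [heq]; exact hsgn, hgc.2 h⟩⟩
    · have hs : sLEm (f (τ i)) (f (τ j)) := hfc.2 hlt
      have hgc := hg b hb a ha
        (by rw [mul_inv_symm_apply, mul_inv_symm_apply]; exact hlt)
      constructor
      · intro h
        rcases hs with hslt | ⟨heq, hsgn⟩
        · exact Or.inl hslt
        · exact Or.inr ⟨heq, Or.inr ⟨by rw [heq]; exact hsgn, hgc.2 h⟩⟩
      · intro h
        rcases hs with hslt | ⟨heq, hsgn⟩
        · exact Or.inl hslt
        · exact Or.inr ⟨heq, Or.inr ⟨by rw [heq]; exact hsgn, hgc.1 h⟩⟩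
  · -- InjOn
    rintro ⟨τ, f, g⟩ ⟨hτ, hf, hg⟩ ⟨τ', f', g'⟩ ⟨hτ', hf', hg'⟩ heq
    have hgg : g = g' := funext fun m => congrArg Prod.snd (congrFun heq m)
    have hffτ : ∀ m, f (τ (π.symm m)) = f' (τ' (π.symm m)) :=
      fun m => congrArg Prod.fst (congrFun heq m)
    have hττ : τ = τ' := by
      apply perm_unique hτ hτ'
      intro i hi j hj
      by_cases hij : i = j
      · subst hij; simp
      · rw [char_tau hπ hg i hi j hj hij, char_tau hπ hg' i hi j hj hij, hgg]
    have hff : f = f' := by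
      funext m
      have h1 := hffτ (π (τ.symm m))
      rw [Equiv.symm_apply_apply, Equiv.apply_symm_apply] at h1
      rw [hττ] at h1
      rw [Equiv.apply_symm_apply] at h1
      exact h1
    simp only [Prod.mk.injEq]
    exact ⟨hττ, hff, hgg⟩
  · -- SurjOn
    intro F hF
    simp only [Set.mem_setOf_eq] at hF
    set Kf : ℕ → (T ×ₗ Bool) ×ₗ ℤ := fun i => key ((F (π i)).2) (π i) with hKf
    have hKinj : Set.InjOn Kf (Finset.Icc 1 n : Finset ℕ) := by
      intro x _ y _ hxy
      simp only [hKf, key] at hxy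
      have h1 := toLex_inj.1 hxy
      rw [Prod.mk.injEq] at h1
      have h2 := toLex_inj.1 h1.1
      have h3 := h1.2
      rw [h2] at h3
      apply π.injective
      by_cases hb : ((F (π y)).2).2 = true
      · rw [if_pos hb, if_pos hb] at h3; exact_mod_cast h3
      · rw [if_neg hb, if_neg hb] at h3; omega
    obtain ⟨τ, hτ, horder⟩ := perm_exists n Kf hKinj
    refine ⟨⟨τ, fun m => (F (π (τ.symm m))).1, fun m => (F m).2⟩, ⟨hτ, ?_, ?_⟩, ?_⟩
    · -- EPPgen τ f
      intro a ha b hb hab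
      dsimp only
      set i := τ.symm a with hi'
      set j := τ.symm b with hj'
      have hi : i ∈ Finset.Icc 1 n := (memIcc_iff (isSn_symm hτ) a).2 ha
      have hj : j ∈ Finset.Icc 1 n := (memIcc_iff (isSn_symm hτ) b).2 hb
      have hπi : π i ∈ Finset.Icc 1 n := (memIcc_iff hπ i).2 hi
      have hπj : π j ∈ Finset.Icc 1 n := (memIcc_iff hπ j).2 hj
      have hta : τ i = a := τ.apply_symm_apply a
      have htb : τ j = b := τ.apply_symm_apply b
      have hijne : i ≠ j := ne_of_lt hab
      have hπne : π i ≠ π j := fun h => hijne (π.injective h)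
      have hFij := hF (π i) hπi (π j) hπj
        (by rw [Equiv.symm_apply_apply, Equiv.symm_apply_apply]; exact hab)
      constructor
      · intro h
        have hK : Kf i < Kf j := (horder i hi j hj).1 (by rw [hta, htb]; exact h)
        have hKt := (key_lt_iff hπne).1 hK
        rcases lt_or_gt_of_ne hπne with hp | hp
        · rcases hFij.1 hp with hs | ⟨hseq, (⟨hsgn, _⟩ | ⟨_, hbad⟩)⟩
          · exact Or.inl hs
          · exact Or.inr ⟨hseq, by rw [← hseq]; exact hsgn⟩
          · exact (sLEp_sLEm_asymm (hKt.1 hp) hbad).elim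
        · rcases hFij.2 hp with hs | ⟨hseq, (⟨hsgn, _⟩ | ⟨_, hbad⟩)⟩
          · exact Or.inl hs
          · exact Or.inr ⟨hseq, by rw [← hseq]; exact hsgn⟩
          · exact (sLEp_sLEm_asymm hbad (hKt.2 hp)).elim
      · intro h
        have hK : Kf j < Kf i := (horder j hj i hi).1 (by rw [hta, htb]; exact h)
        have hKt := (key_lt_iff (Ne.symm hπne)).1 hK
        rcases lt_or_gt_of_ne hπne with hp | hp
        · rcases hFij.1 hp with hs | ⟨hseq, (⟨_, hbad⟩ | ⟨hsgn, _⟩)⟩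
          · exact Or.inl hs
          · exact (sLEp_sLEm_asymm hbad (hKt.2 hp)).elim
          · exact Or.inr ⟨hseq, by rw [← hseq]; exact hsgn⟩
        · rcases hFij.2 hp with hs | ⟨hseq, (⟨_, hbad⟩ | ⟨hsgn, _⟩)⟩
          · exact Or.inl hs
          · exact (sLEp_sLEm_asymm (hKt.1 hp) hbad).elim
          · exact Or.inr ⟨hseq, by rw [← hseq]; exact hsgn⟩
    · -- EPPgen (π * τ⁻¹) g
      intro a ha b hb hab
      dsimp only
      rw [mul_inv_symm_apply, mul_inv_symm_apply] at hab
      set i := π.symm a with hia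
      set j := π.symm b with hjb
      have hi : i ∈ Finset.Icc 1 n := (memIcc_iff (isSn_symm hπ) a).2 ha
      have hj : j ∈ Finset.Icc 1 n := (memIcc_iff (isSn_symm hπ) b).2 hb
      have hπa : π i = a := π.apply_symm_apply a
      have hπb : π j = b := π.apply_symm_apply b
      have hijne : i ≠ j := fun h => lt_irrefl _ (h ▸ hab)
      have hπne : π i ≠ π j := fun h => hijne (π.injective h)
      have hK : Kf i < Kf j := (horder i hi j hj).1 hab
      have hKt := (key_lt_iff hπne).1 hK
      rw [hπa, hπb] at hKt
      exact hKt
    · funext m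
      show ((F (π (τ.symm (τ (π.symm m))))).1, (F m).2) = F m
      rw [Equiv.symm_apply_apply, Equiv.apply_symm_apply]
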